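/- Let W and U be pseudo-euclidean subspaces of V with W + U = V. If U ∩ W = span{v} for some timelike vector v, then B is positive definite on the subspace W^⊥ + U^⊥, i.e. B x x > 0 for every nonzero x ∈ W^⊥ + U^⊥; consequently, for any two linearly independent vectors n ∈ W^⊥ and m ∈ U^⊥ with B n n = B m m = 1 one has (B n m)² < 1, so any two hyperspheres containing the respective subspheres intersect, and the subspheres are interlaced (cannot be separated by disjoint hyperspheres). -/
import Mathlib


noncomputable section

/-- The Minkowski bilinear form of index 1 on `ℝ^{n+2}`:
`B x y = ∑_{i=0}^{n} x i * y i − x (n+1) * y (n+1)`. -/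
def mB (n : ℕ) : (Fin (n+2) → ℝ) →ₗ[ℝ] (Fin (n+2) → ℝ) →ₗ[ℝ] ℝ :=
  LinearMap.mk₂ ℝ
    (fun x y => ∑ i : Fin (n+2), (if (i : ℕ) = n+1 then (-1:ℝ) else 1) * x i * y i)
    (fun x x' y => by
      rw [← Finset.sum_add_distrib]
      exact Finset.sum_congr rfl fun i _ => by simp only [Pi.add_apply]; ring)
    (fun c x y => by
      rw [smul_eq_mul, Finset.mul_sum]
      exact Finset.sum_congr rfl fun i _ => by simp only [Pi.smul_apply, smul_eq_mul]; ring)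
    (fun x y y' => by
      rw [← Finset.sum_add_distrib]
      exact Finset.sum_congr rfl fun i _ => by simp only [Pi.add_apply]; ring)
    (fun c x y => by
      rw [smul_eq_mul, Finset.mul_sum]
      exact Finset.sum_congr rfl fun i _ => by simp only [Pi.smul_apply, smul_eq_mul]; ring)

/-- The orthogonal complement `S^⊥ = {x | ∀ s ∈ S, B x s = 0}` w.r.t. the Minkowski form. -/
def mperp (n : ℕ) (S : Submodule ℝ (Fin (n+2) → ℝ)) : Submodule ℝ (Fin (n+2) → ℝ) where
  carrier := {x | ∀ s ∈ S, mB n x s = 0}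
  zero_mem' := fun s _ => by simp
  add_mem' := fun ha hb s hs => by simp [ha s hs, hb s hs]
  smul_mem' := fun c a ha s hs => by simp [ha s hs]

/-- A subspace is pseudo-euclidean if the Minkowski form restricted to it
is nondegenerate and it contains a timelike vector. -/
def IsPseudoEuclidean (n : ℕ) (S : Submodule ℝ (Fin (n+2) → ℝ)) : Prop :=
  (∀ x ∈ S, (∀ y ∈ S, mB n x y = 0) → x = 0) ∧ ∃ x ∈ S, mB n x x < 0

lemma mB_apply (n : ℕ) (x y : Fin (n+2) → ℝ) :
    mB n x y = ∑ i : Fin (n+2), (if (i : ℕ) = n+1 then (-1:ℝ) else 1) * x i * y i := rfl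

lemma mB_comm (n : ℕ) (x y : Fin (n+2) → ℝ) : mB n x y = mB n y x := by
  simp only [mB_apply]
  exact Finset.sum_congr rfl fun i _ => by ring

lemma mB_split (n : ℕ) (x y : Fin (n+2) → ℝ) :
    mB n x y = (∑ i : Fin (n+1), x (Fin.castSucc i) * y (Fin.castSucc i))
      - x (Fin.last (n+1)) * y (Fin.last (n+1)) := by
  rw [mB_apply, Fin.sum_univ_castSucc]
  have h1 : ∀ i : Fin (n+1), ((Fin.castSucc i : Fin (n+2)) : ℕ) ≠ n+1 := by
    intro i
    have := i.isLt
    simp [Fin.castSucc, Fin.coe_castSucc]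
    omega
  rw [Finset.sum_congr rfl (fun i _ => by rw [if_neg (h1 i), one_mul])]
  simp [Fin.val_last]
  ring

/-- Positive definiteness on the orthocomplement of a timelike vector. -/
lemma pos_of_perp_timelike (n : ℕ) (v x : Fin (n+2) → ℝ)
    (hv : mB n v v < 0) (hvx : mB n v x = 0) (hx : x ≠ 0) : 0 < mB n x x := by
  set a : Fin (n+1) → ℝ := fun i => v (Fin.castSucc i) with ha
  set b : Fin (n+1) → ℝ := fun i => x (Fin.castSucc i) with hb
  set ve := v (Fin.last (n+1)) with hve
  set xe := x (Fin.last (n+1)) with hxe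
  have hv' : (∑ i, a i * a i) - ve * ve < 0 := by rw [← mB_split]; exact hv
  have hvx' : (∑ i, a i * b i) - ve * xe = 0 := by rw [← mB_split]; exact hvx
  rw [mB_split]
  have hA : 0 ≤ ∑ i, a i * a i := Finset.sum_nonneg fun i _ => mul_self_nonneg _
  have hCS : (∑ i, a i * b i) ^ 2 ≤ (∑ i, a i ^ 2) * ∑ i, b i ^ 2 :=
    Finset.sum_mul_sq_le_sq_mul_sq Finset.univ a b
  have hB : 0 ≤ ∑ i, b i * b i := Finset.sum_nonneg fun i _ => mul_self_nonneg _
  have hsqa : (∑ i, a i ^ 2) = ∑ i, a i * a i :=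
    Finset.sum_congr rfl fun i _ => by ring
  have hsqb : (∑ i, b i ^ 2) = ∑ i, b i * b i :=
    Finset.sum_congr rfl fun i _ => by ring
  rw [hsqa, hsqb] at hCS
  rcases eq_or_lt_of_le hB with hB0 | hBpos
  · -- all b i = 0, then xe = 0, so x = 0, contradiction
    exfalso
    have hbz : ∀ i, b i = 0 := by
      intro i
      have := Finset.sum_eq_zero_iff_of_nonneg
        (fun i (_ : i ∈ Finset.univ) => mul_self_nonneg (b i)) |>.mp hB0.symm i (Finset.mem_univ i)
      exact mul_self_eq_zero.mp this
    have hab : (∑ i, a i * b i) = 0 := Finset.sum_eq_zero fun i _ => by rw [hbz i, mul_zero]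
    have hvex : ve * xe = 0 := by linarith
    have hvene : ve ≠ 0 := by
      intro h
      rw [h] at hv'
      nlinarith
    have hxez : xe = 0 := by
      rcases mul_eq_zero.mp hvex with h | h
      · exact absurd h hvene
      · exact h
    apply hx
    funext i
    refine Fin.lastCases ?_ ?_ i
    · exact hxez
    · intro j; exact hbz j
  · -- positive case
    show 0 < (∑ i, b i * b i) - xe * xe
    have hP : (∑ i, a i * b i) = ve * xe := by linarith
    rw [hP] at hCS
    have hve2 : 0 < ve * ve := by nlinarith
    have h1 : ve * ve * (xe * xe) < ve * ve * (∑ i, b i * b i) := by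
      nlinarith [mul_pos (show (0:ℝ) < ve * ve - ∑ i, a i * a i by linarith) hBpos]
    have h2 := (mul_lt_mul_iff_right₀ hve2).mp h1
    linarith

/-- If `U ∩ W` is spanned by a timelike vector (case 3), then the Minkowski
form is positive definite on `W^⊥ + U^⊥`; hence any two hyperspheres containing
the respective subspheres intersect, and the subspheres are interlaced. -/
theorem interlaced_subspheres
    (n : ℕ) (hn : 0 < n) (W U : Submodule ℝ (Fin (n+2) → ℝ))
    (hW : IsPseudoEuclidean n W) (hU : IsPseudoEuclidean n U)
    (hsum : W ⊔ U = ⊤) (v : Fin (n+2) → ℝ) (hv : mB n v v < 0)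
    (hinter : U ⊓ W = Submodule.span ℝ {v}) :
    (∀ x ∈ mperp n W ⊔ mperp n U, x ≠ 0 → 0 < mB n x x) ∧
    (∀ nv mv : Fin (n+2) → ℝ, nv ∈ mperp n W → mv ∈ mperp n U →
      mB n nv nv = 1 → mB n mv mv = 1 → LinearIndependent ℝ ![nv, mv] →
      (mB n nv mv)^2 < 1) := by
  have hvUW : v ∈ U ⊓ W := by
    rw [hinter]; exact Submodule.mem_span_singleton_self v
  have hvU : v ∈ U := hvUW.1
  have hvW : v ∈ W := hvUW.2
  have key : ∀ x ∈ mperp n W ⊔ mperp n U, x ≠ 0 → 0 < mB n x x := by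
    intro x hx hx0
    obtain ⟨w, hw, u, hu, rfl⟩ := Submodule.mem_sup.mp hx
    have hwv : mB n w v = 0 := hw v hvW
    have huv : mB n u v = 0 := hu v hvU
    have hvx : mB n v (w + u) = 0 := by
      rw [mB_comm]
      simp [map_add, hwv, huv]
    exact pos_of_perp_timelike n v (w + u) hv hvx hx0
  refine ⟨key, ?_⟩
  intro nv mv hnW hmU hnn hmm hli
  set t := mB n nv mv with ht
  have hxmem : nv + (-t) • mv ∈ mperp n W ⊔ mperp n U :=
    Submodule.add_mem _ (Submodule.mem_sup_left hnW)
      (Submodule.mem_sup_right (Submodule.smul_mem _ _ hmU))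
  have hxne : nv + (-t) • mv ≠ 0 := by
    intro h
    have := (LinearIndependent.pair_iff.mp hli 1 (-t) (by rw [one_smul]; exact h)).1
    exact one_ne_zero this
  have hpos := key _ hxmem hxne
  have hexp : mB n (nv + (-t) • mv) (nv + (-t) • mv) = 1 - t ^ 2 := by
    have hcomm : mB n mv nv = t := by rw [mB_comm]
    simp only [map_add, map_smul, LinearMap.add_apply, LinearMap.smul_apply, smul_eq_mul,
      hnn, hmm, hcomm]
    ring
  rw [hexp] at hpos
  linarith
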